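/- Let L be a relational coloring language, W a set of allowed diagrams in L, and λ an infinite cardinal. Then K(W) has the disjoint amalgamation property for models of size λ if and only if for every special (λ,2)-system of W-colorings {c_1, c_2} (with underlying set X of size λ and points a_1, a_2 ∉ X) there is a W-coloring c of X ∪ {a_1, a_2} extending both c_1 and c_2. -/

import Mathlib

universe u v

open Cardinal

/-- A relational coloring language: a family of pairwise disjoint nonempty sets `R_n`
(`n ≥ 1`) of `n`-ary colors, encoded as a type of colors together with an arity map
whose fibers over `n ≥ 1` are all nonempty. -/
structure ColoringLanguage : Type (u + 1) where
  Color : Type u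
  arity : Color → ℕ
  arity_pos : ∀ r, 1 ≤ arity r
  exists_arity : ∀ n : ℕ, 1 ≤ n → ∃ r, arity r = n

namespace ColoringLanguage

variable (L : ColoringLanguage.{u})

/-- A diagram is (encoded as) a list of colors whose `i`-th entry (0-based) is an
`(i+1)`-ary color; it represents the function `w : [n] → R` with `w(k) ∈ R_k`. -/
def IsDiagram (l : List L.Color) : Prop :=
  ∀ (i : ℕ) (h : i < l.length), L.arity l[i] = i + 1

/-- A set of allowed diagrams: a nonempty set of diagrams closed under restriction to
initial segments. -/
def IsAllowed (W : Set (List L.Color)) : Prop :=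
  W.Nonempty ∧ (∀ l ∈ W, L.IsDiagram l) ∧ ∀ l ∈ W, ∀ m : ℕ, l.take m ∈ W

end ColoringLanguage

/-- `ERge W γ l` says that the existence rank of `l` with respect to `W` is `≥ γ`:
`ER(l;W) ≥ β + 1` iff some one-step extension `l' ∈ W` of `l` has `ER(l';W) ≥ β`,
with the limit (and zero) clauses as usual. -/
noncomputable def ERge {C : Type v} (W : Set (List C)) : Ordinal.{u} → List C → Prop :=
  WellFounded.fix Ordinal.lt_wf fun α IH l =>
    ∀ β, ∀ h : β < α,
      ∃ l' ∈ W, l'.length = l.length + 1 ∧ l'.take l.length = l ∧ IH β h l'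

/-- `prunedW W S` is `W_S`, the set of elements of `W` comparable with some element of `S`. -/
def prunedW {C : Type v} (W S : Set (List C)) : Set (List C) :=
  {w ∈ W | ∃ u ∈ S, w <+: u ∨ u <+: w}

/-- `quotW W wbar` is `W / w̄`: the set of diagrams `w / w̄` for `w ∈ W` extending `w̄`. -/
def quotW {C : Type v} (W : Set (List C)) (wbar : List C) : Set (List C) :=
  (fun l => l.drop wbar.length) '' {l ∈ W | wbar <+: l}

/-- The beth function with base `κ`: `ℶ_0(κ) = κ`, `ℶ_{α+1}(κ) = 2 ^ ℶ_α(κ)`,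
and suprema at limits. -/
noncomputable def bethF (κ : Cardinal.{u}) (o : Ordinal.{u}) : Cardinal.{u} :=
  Ordinal.limitRecOn o κ (fun _ ih => 2 ^ ih)
    fun o' _ ih => ⨆ b : Set.Iio o', ih b.1 b.2

/-- The cardinals `κ_α`: `κ_α = α` for finite `α`, suprema at limits, and
`κ_{β+1} = 2 ^ κ_β` for `β ≥ ω`. -/
noncomputable def kappaC (o : Ordinal.{u}) : Cardinal.{u} :=
  Ordinal.limitRecOn o 0
    (fun o' ih => if o' < Ordinal.omega0 then ih + 1 else 2 ^ ih)
    fun o' _ ih => ⨆ b : Set.Iio o', ih b.1 b.2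

namespace ColoringLanguage

variable (L : ColoringLanguage.{u}) {σ τ : Type u}

/-- `c` is an `L`-coloring of the set `M`: every finite nonempty `A ⊆ M` gets a color
of arity `|A|`. (Values of `c` outside of `M` are irrelevant.) -/
def IsColoring (M : Set σ) (c : Finset σ → L.Color) : Prop :=
  ∀ A : Finset σ, ↑A ⊆ M → A.Nonempty → L.arity (c A) = A.card

/-- `B` is monochromatic for `c`: any two finite nonempty subsets of `B` of equal size
get the same color. -/
def Mono (c : Finset σ → L.Color) (B : Set σ) : Prop :=
  ∀ A₁ A₂ : Finset σ, ↑A₁ ⊆ B → ↑A₂ ⊆ B → A₁.Nonempty → A₁.card = A₂.card → c A₁ = c A₂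

/-- `l` is the diagram of the (monochromatic) finite set `B` under `c`. -/
def DiagramOf (c : Finset σ → L.Color) (B : Finset σ) (l : List L.Color) : Prop :=
  l.length = B.card ∧ ∀ A : Finset σ, A ⊆ B → A.Nonempty → l[A.card - 1]? = some (c A)

/-- `(M,c)` is a member of the coloring class `K(W)`: `c` is an `L`-coloring of `M`
and every finite nonempty monochromatic subset of `M` has its diagram in `W`. -/
def MemK (W : Set (List L.Color)) (M : Set σ) (c : Finset σ → L.Color) : Prop :=
  L.IsColoring M c ∧
    ∀ B : Finset σ, ↑B ⊆ M → B.Nonempty → L.Mono c ↑B → ∃ l ∈ W, L.DiagramOf c B l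

/-- `(M,c)` is a substructure of `(N,c')`. -/
def Substruct (M : Set σ) (c : Finset σ → L.Color) (N : Set σ)
    (c' : Finset σ → L.Color) : Prop :=
  M ⊆ N ∧ ∀ A : Finset σ, ↑A ⊆ M → A.Nonempty → c A = c' A

/-- `f` is an embedding of `(M,c)` into `(N,c')`. -/
def Emb (f : σ → τ) (M : Set σ) (c : Finset σ → L.Color) (N : Set τ)
    (c' : Finset τ → L.Color) : Prop :=
  Set.InjOn f M ∧ f '' M ⊆ N ∧
    ∀ A : Finset σ, ↑A ⊆ M → A.Nonempty →
      haveI := Classical.decEq τ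
      c' (A.image f) = c A

/-- `K(W)` has the amalgamation property for models of size `lam`. -/
def HasAPAt (W : Set (List L.Color)) (lam : Cardinal.{u}) : Prop :=
  ∀ (σ : Type u) (M₀ M₁ M₂ : Set σ) (c₀ c₁ c₂ : Finset σ → L.Color),
    L.MemK W M₀ c₀ → L.MemK W M₁ c₁ → L.MemK W M₂ c₂ →
    Cardinal.mk ↥M₀ = lam → Cardinal.mk ↥M₁ = lam → Cardinal.mk ↥M₂ = lam →
    L.Substruct M₀ c₀ M₁ c₁ → L.Substruct M₀ c₀ M₂ c₂ →
    ∃ (τ : Type u) (N : Set τ) (c : Finset τ → L.Color) (f₁ f₂ : σ → τ),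
      L.MemK W N c ∧ L.Emb f₁ M₁ c₁ N c ∧ L.Emb f₂ M₂ c₂ N c ∧
      ∀ x ∈ M₀, f₁ x = f₂ x

/-- `K(W)` has the disjoint amalgamation property for models of size `lam`. -/
def HasDAPAt (W : Set (List L.Color)) (lam : Cardinal.{u}) : Prop :=
  ∀ (σ : Type u) (M₀ M₁ M₂ : Set σ) (c₀ c₁ c₂ : Finset σ → L.Color),
    L.MemK W M₀ c₀ → L.MemK W M₁ c₁ → L.MemK W M₂ c₂ →
    Cardinal.mk ↥M₀ = lam → Cardinal.mk ↥M₁ = lam → Cardinal.mk ↥M₂ = lam →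
    L.Substruct M₀ c₀ M₁ c₁ → L.Substruct M₀ c₀ M₂ c₂ →
    ∃ (τ : Type u) (N : Set τ) (c : Finset τ → L.Color) (f₁ f₂ : σ → τ),
      L.MemK W N c ∧ L.Emb f₁ M₁ c₁ N c ∧ L.Emb f₂ M₂ c₂ N c ∧
      (∀ x ∈ M₀, f₁ x = f₂ x) ∧ f₁ '' M₁ ∩ f₂ '' M₂ = f₁ '' M₀

end ColoringLanguage

section Aux

variable {L : ColoringLanguage.{u}} {σ τ : Type u} {W : Set (List L.Color)}

namespace ColoringLanguage

lemma MemK.subset {M M' : Set σ} {c : Finset σ → L.Color}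
    (h : L.MemK W M c) (hM : M' ⊆ M) : L.MemK W M' c :=
  ⟨fun A hA hne => h.1 A (hA.trans hM) hne,
   fun B hB hne hm => h.2 B (hB.trans hM) hne hm⟩

lemma MemK.congr {M : Set σ} {c c' : Finset σ → L.Color}
    (h : L.MemK W M c) (hagree : ∀ A : Finset σ, ↑A ⊆ M → A.Nonempty → c A = c' A) :
    L.MemK W M c' := by
  constructor
  · intro A hA hne; rw [← hagree A hA hne]; exact h.1 A hA hne
  · intro B hB hne hm
    have hm' : L.Mono c ↑B := by
      intro A₁ A₂ h1 h2 hne1 hcard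
      have hne2 : A₂.Nonempty := by
        rw [← Finset.card_pos] at hne1 ⊢; omega
      rw [hagree A₁ (h1.trans hB) hne1, hagree A₂ (h2.trans hB) hne2]
      exact hm A₁ A₂ h1 h2 hne1 hcard
    obtain ⟨l, hlW, hlen, hdiag⟩ := h.2 B hB hne hm'
    refine ⟨l, hlW, hlen, fun A hA hAne => ?_⟩
    rw [← hagree A ((Finset.coe_subset.2 hA).trans hB) hAne]
    exact hdiag A hA hAne

lemma image_g_subset [DecidableEq σ] {M : Set σ} {f : σ → τ} {g : τ → σ}
    (hgf : ∀ x ∈ M, g (f x) = x) {A : Finset τ} (hA : ↑A ⊆ f '' M) :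
    ↑(A.image g) ⊆ M := by
  intro y hy
  rw [Finset.coe_image] at hy
  obtain ⟨t, ht, rfl⟩ := hy
  obtain ⟨x, hx, rfl⟩ := hA ht
  rw [hgf x hx]; exact hx

lemma image_image_id [DecidableEq σ] [DecidableEq τ] {M : Set σ} {f : σ → τ} {g : τ → σ}
    (hgf : ∀ x ∈ M, g (f x) = x) (A : Finset σ) (hA : ↑A ⊆ M) :
    (A.image f).image g = A := by
  rw [Finset.image_image]
  calc A.image (g ∘ f) = A.image id := Finset.image_congr (fun a ha => hgf a (hA ha))
    _ = A := Finset.image_id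

lemma MemK.transport [DecidableEq σ] [DecidableEq τ] {M : Set σ} {c : Finset σ → L.Color}
    (f : σ → τ) (g : τ → σ)
    (hgf : ∀ x ∈ M, g (f x) = x) (h : L.MemK W M c) :
    L.MemK W (f '' M) (fun B => c (B.image g)) := by
  have hfg : ∀ t ∈ f '' M, f (g t) = t := by
    rintro t ⟨x, hx, rfl⟩; rw [hgf x hx]
  have hsub : ∀ B : Finset τ, ↑B ⊆ f '' M → ↑(B.image g) ⊆ M := fun B hB =>
    image_g_subset hgf hB
  have hcard : ∀ B : Finset τ, ↑B ⊆ f '' M → (B.image g).card = B.card := by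
    intro B hB
    apply Finset.card_image_of_injOn
    intro t ht t' ht' he
    rw [← hfg t (hB ht), ← hfg t' (hB ht'), he]
  have hback : ∀ (B : Finset τ), ↑B ⊆ f '' M → ∀ A : Finset σ, A ⊆ B.image g →
      (A.image f ⊆ B ∧ (A.image f).image g = A ∧ (A.image f).card = A.card) := by
    intro B hB A hA
    have hAM : ↑A ⊆ M := (Finset.coe_subset.2 hA).trans (hsub B hB)
    refine ⟨?_, ?_, ?_⟩
    · intro t ht
      obtain ⟨a, ha, rfl⟩ := Finset.mem_image.1 ht
      obtain ⟨b, hb, rfl⟩ := Finset.mem_image.1 (hA ha)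
      rw [hfg b (hB hb)]; exact hb
    · rw [Finset.image_image]
      have : ∀ a ∈ A, (g ∘ f) a = a := fun a ha => hgf a (hAM ha)
      calc A.image (g ∘ f) = A.image id := Finset.image_congr (fun a ha => this a ha)
        _ = A := Finset.image_id
    · apply Finset.card_image_of_injOn
      intro x hx y hy he
      rw [← hgf x (hAM hx), ← hgf y (hAM hy), he]
  constructor
  · intro A hA hne
    have := h.1 (A.image g) (hsub A hA) (hne.image g)
    rw [hcard A hA] at this
    exact this
  · intro B hB hne hm
    have hm' : L.Mono c ↑(B.image g) := by
      intro A₁ A₂ h1 h2 hne1 hcardeq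
      obtain ⟨hs1, hi1, hc1⟩ := hback B hB A₁ (Finset.coe_subset.1 h1)
      obtain ⟨hs2, hi2, hc2⟩ := hback B hB A₂ (Finset.coe_subset.1 h2)
      have := hm (A₁.image f) (A₂.image f) (Finset.coe_subset.2 hs1)
        (Finset.coe_subset.2 hs2) (hne1.image f) (by rw [hc1, hc2, hcardeq])
      rw [← hi1, ← hi2]
      exact this
    obtain ⟨l, hlW, hlen, hdiag⟩ := h.2 (B.image g) (hsub B hB) (hne.image g) hm'
    refine ⟨l, hlW, by rw [hlen, hcard B hB], fun A hA hAne => ?_⟩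
    have hAB : ↑A ⊆ (↑B : Set τ) := Finset.coe_subset.2 hA
    have hAfM : ↑A ⊆ f '' M := hAB.trans hB
    have h1 : A.image g ⊆ B.image g := Finset.image_subset_image hA
    have := hdiag (A.image g) h1 (hAne.image g)
    rw [hcard A hAfM] at this
    exact this


lemma MemK.pullback [DecidableEq σ] [DecidableEq τ] {N : Set τ} {cN : Finset τ → L.Color}
    (h : L.MemK W N cN) {M : Set σ} (g : σ → τ) (hinj : Set.InjOn g M) (him : g '' M ⊆ N) :
    L.MemK W M (fun A => cN (A.image g)) := by
  classical
  rcases Set.eq_empty_or_nonempty M with rfl | ⟨m₀, hm₀⟩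
  · constructor
    · intro A hA hAne
      obtain ⟨x, hx⟩ := hAne
      exact absurd (hA hx) (Set.notMem_empty x)
    · intro B hB hBne _
      obtain ⟨x, hx⟩ := hBne
      exact absurd (hB hx) (Set.notMem_empty x)
  · set g' : τ → σ := fun t => if h : ∃ x ∈ M, g x = t then h.choose else m₀ with hg'def
    have hgg' : ∀ x ∈ M, g' (g x) = x := by
      intro x hx
      have hex : ∃ y ∈ M, g y = g x := ⟨x, hx, rfl⟩
      rw [hg'def]
      simp only [dif_pos hex]
      obtain ⟨hyM, hyx⟩ := hex.choose_spec
      exact hinj hyM hx hyx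
    have hcond : ∀ t ∈ g '' M, g (g' t) = t := by
      rintro t ⟨x, hx, rfl⟩
      rw [hgg' x hx]
    have h2 := (h.subset him).transport g' g hcond
    have hset : g' '' (g '' M) = M := by
      ext x
      constructor
      · rintro ⟨t, ⟨y, hy, rfl⟩, rfl⟩
        rw [hgg' y hy]; exact hy
      · intro hx
        exact ⟨g x, ⟨x, hx, rfl⟩, hgg' x hx⟩
    rw [hset] at h2
    exact h2


end ColoringLanguage

end Aux

section Zorn

variable {L : ColoringLanguage.{u}} {τ : Type u} {W : Set (List L.Color)}

namespace ColoringLanguage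

lemma mono_congr' {c c' : Finset τ → L.Color} {B : Finset τ}
    (h : ∀ A : Finset τ, A ⊆ B → A.Nonempty → c A = c' A) (hm : L.Mono c ↑B) :
    L.Mono c' ↑B := by
  intro A₁ A₂ h1 h2 hne1 hcard
  have hne2 : A₂.Nonempty := by rw [← Finset.card_pos] at hne1 ⊢; omega
  rw [← h A₁ (Finset.coe_subset.1 h1) hne1, ← h A₂ (Finset.coe_subset.1 h2) hne2]
  exact hm A₁ A₂ h1 h2 hne1 hcard

lemma diagramOf_congr {c c' : Finset τ → L.Color} {B : Finset τ} {l : List L.Color}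
    (h : ∀ A : Finset τ, A ⊆ B → A.Nonempty → c A = c' A) (hd : L.DiagramOf c B l) :
    L.DiagramOf c' B l :=
  ⟨hd.1, fun A hA hAne => by rw [← h A hA hAne]; exact hd.2 A hA hAne⟩

/-- A partial coloring between `base` and `top`, in `K(W)`, whose values satisfy `R`. -/
structure PC (L : ColoringLanguage.{u}) {τ : Type u} (W : Set (List L.Color))
    (base top : Set τ) (R : Finset τ → L.Color → Prop) : Type u where
  S : Set τ
  d : Finset τ → L.Color
  base_sub : base ⊆ S
  sub_top : S ⊆ top
  memK : L.MemK W S d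
  hR : ∀ A : Finset τ, ↑A ⊆ S → A.Nonempty → R A (d A)

instance {base top : Set τ} {R : Finset τ → L.Color → Prop} :
    Preorder (PC L W base top R) where
  le p q := p.S ⊆ q.S ∧ ∀ A : Finset τ, ↑A ⊆ p.S → A.Nonempty → p.d A = q.d A
  le_refl p := ⟨subset_rfl, fun _ _ _ => rfl⟩
  le_trans p q r h1 h2 :=
    ⟨h1.1.trans h2.1, fun A hA hne => (h1.2 A hA hne).trans (h2.2 A (hA.trans h1.1) hne)⟩

lemma zorn_coloring {base top : Set τ} {R : Finset τ → L.Color → Prop} (hbt : base ⊆ top)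
    (d₀ : Finset τ → L.Color) (h₀K : L.MemK W base d₀)
    (h₀R : ∀ A : Finset τ, ↑A ⊆ base → A.Nonempty → R A (d₀ A))
    (step : ∀ (S : Set τ) (d : Finset τ → L.Color), base ⊆ S → S ⊆ top → L.MemK W S d →
      (∀ A : Finset τ, ↑A ⊆ S → A.Nonempty → R A (d A)) → ∀ p ∈ top, p ∉ S →
      ∃ d', L.MemK W (S ∪ {p}) d' ∧ (∀ A : Finset τ, ↑A ⊆ S → A.Nonempty → d A = d' A) ∧
        ∀ A : Finset τ, ↑A ⊆ S ∪ {p} → A.Nonempty → R A (d' A)) :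
    ∃ d, L.MemK W top d ∧ ∀ A : Finset τ, ↑A ⊆ top → A.Nonempty → R A (d A) := by
  classical
  haveI : Nonempty (PC L W base top R) := ⟨⟨base, d₀, subset_rfl, hbt, h₀K, h₀R⟩⟩
  have hbound : ∀ C : Set (PC L W base top R), IsChain (· ≤ ·) C → C.Nonempty → BddAbove C := by
    intro C hC hCne
    set SU : Set τ := ⋃ p ∈ C, p.S with hSU
    have cover : ∀ A : Finset τ, ↑A ⊆ SU → ∃ p ∈ C, ↑A ⊆ p.S := by
      intro A
      induction A using Finset.induction_on with
      | empty =>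
        intro _
        obtain ⟨p, hp⟩ := hCne
        exact ⟨p, hp, by simp⟩
      | @insert a A hna ih =>
        intro hsub
        obtain ⟨p, hp, hpA⟩ := ih (by
          refine Finset.coe_subset.2 (Finset.subset_insert a A) |>.trans hsub)
        have haU : a ∈ SU := hsub (by simp)
        obtain ⟨q, hq, haq⟩ : ∃ q ∈ C, a ∈ q.S := by
          simpa [hSU] using haU
        rcases hC.total hp hq with hle | hle
        · refine ⟨q, hq, ?_⟩
          rw [Finset.coe_insert]
          exact Set.insert_subset haq (hpA.trans hle.1)
        · refine ⟨p, hp, ?_⟩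
          rw [Finset.coe_insert]
          exact Set.insert_subset (hle.1 haq) hpA
    set dU : Finset τ → L.Color := fun A =>
      if h : ∃ p ∈ C, ↑A ⊆ p.S then (h.choose).d A else d₀ A with hdU
    have dUspec : ∀ p ∈ C, ∀ A : Finset τ, ↑A ⊆ p.S → A.Nonempty → dU A = p.d A := by
      intro p hp A hA hAne
      have hex : ∃ q ∈ C, ↑A ⊆ q.S := ⟨p, hp, hA⟩
      rw [hdU]
      simp only [dif_pos hex]
      obtain ⟨hqC, hAq⟩ := hex.choose_spec
      rcases hC.total hqC hp with hle | hle
      · exact (hle.2 A hAq hAne).symm ▸ rfl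
      · exact (hle.2 A hA hAne).symm
    have hbaseSU : base ⊆ SU := by
      obtain ⟨p, hp⟩ := hCne
      exact p.base_sub.trans (Set.subset_biUnion_of_mem hp)
    have hSUtop : SU ⊆ top := by
      refine Set.iUnion₂_subset fun p _ => p.sub_top
    have hKU : L.MemK W SU dU := by
      constructor
      · intro A hA hAne
        obtain ⟨p, hp, hAp⟩ := cover A hA
        rw [dUspec p hp A hAp hAne]
        exact p.memK.1 A hAp hAne
      · intro B hB hBne hm
        obtain ⟨p, hp, hBp⟩ := cover B hB
        have hagree : ∀ A : Finset τ, A ⊆ B → A.Nonempty → dU A = p.d A := fun A hA hAne =>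
          dUspec p hp A ((Finset.coe_subset.2 hA).trans hBp) hAne
        have hm' : L.Mono p.d ↑B := mono_congr' hagree hm
        obtain ⟨l, hlW, hld⟩ := p.memK.2 B hBp hBne hm'
        exact ⟨l, hlW, diagramOf_congr (fun A hA hAne => (hagree A hA hAne).symm) hld⟩
    have hRU : ∀ A : Finset τ, ↑A ⊆ SU → A.Nonempty → R A (dU A) := by
      intro A hA hAne
      obtain ⟨p, hp, hAp⟩ := cover A hA
      rw [dUspec p hp A hAp hAne]
      exact p.hR A hAp hAne
    refine ⟨⟨SU, dU, hbaseSU, hSUtop, hKU, hRU⟩, fun p hp => ?_⟩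
    exact ⟨Set.subset_biUnion_of_mem hp, fun A hA hAne => (dUspec p hp A hA hAne).symm⟩
  obtain ⟨m, hmax⟩ := zorn_le_nonempty (α := PC L W base top R) hbound
  · -- maximal element has S = top
    have hStop : m.S = top := by
      by_contra hne
      obtain ⟨p, hptop, hpS⟩ : ∃ p ∈ top, p ∉ m.S := by
        rcases Set.exists_of_ssubset (ssubset_of_ne_of_subset hne m.sub_top) with ⟨p, h1, h2⟩
        exact ⟨p, h1, h2⟩
      obtain ⟨d', hK', hag', hR'⟩ := step m.S m.d m.base_sub m.sub_top m.memK m.hR p hptop hpS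
      set q : PC L W base top R :=
        ⟨m.S ∪ {p}, d', m.base_sub.trans Set.subset_union_left,
          Set.union_subset m.sub_top (by simpa using hptop), hK', hR'⟩ with hq
      have hmq : m ≤ q := ⟨Set.subset_union_left, hag'⟩
      have := hmax hmq
      exact hpS (this.1 (by simp [hq]))
    refine ⟨m.d, m.memK.subset hStop.symm.subset, fun A hA hAne => ?_⟩
    exact m.hR A (hA.trans hStop.symm.subset) hAne
end ColoringLanguage

end Zorn

section LemmaA

variable {L : ColoringLanguage.{u}} {σ : Type u} {W : Set (List L.Color)}

lemma ColoringLanguage.extend_one {lam : Cardinal.{u}}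
    (hsys : ∀ (X : Set σ) (a₁ a₂ : σ) (c₁ c₂ : Finset σ → L.Color),
        a₁ ∉ X → a₂ ∉ X → a₁ ≠ a₂ → Cardinal.mk ↥X = lam →
        L.MemK W (X ∪ {a₁}) c₁ → L.MemK W (X ∪ {a₂}) c₂ →
        (∀ A : Finset σ, ↑A ⊆ X → A.Nonempty → c₁ A = c₂ A) →
        ∃ c : Finset σ → L.Color,
          L.MemK W (X ∪ {a₁, a₂}) c ∧
          (∀ A : Finset σ, ↑A ⊆ X ∪ {a₁} → A.Nonempty → c A = c₁ A) ∧
          (∀ A : Finset σ, ↑A ⊆ X ∪ {a₂} → A.Nonempty → c A = c₂ A))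
    {X Y : Set σ} {a : σ} (haX : a ∉ X) (hYX : Y ⊆ X)
    (hXcard : Cardinal.mk ↥X = lam) (hYcard : Cardinal.mk ↥Y = lam)
    {d e : Finset σ → L.Color} (hd : L.MemK W X d) (he : L.MemK W (Y ∪ {a}) e)
    (hagree : ∀ A : Finset σ, ↑A ⊆ Y → A.Nonempty → d A = e A) :
    ∃ g, L.MemK W (X ∪ {a}) g ∧ (∀ A : Finset σ, ↑A ⊆ X → A.Nonempty → g A = d A) ∧
      (∀ A : Finset σ, ↑A ⊆ Y ∪ {a} → A.Nonempty → g A = e A) := by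
  have haY : a ∉ Y := fun h => haX (hYX h)
  have h0R : ∀ A : Finset σ, ↑A ⊆ Y ∪ {a} → A.Nonempty →
      ((↑A ⊆ X → e A = d A) ∧ (↑A ⊆ Y ∪ {a} → e A = e A)) := by
    intro A hA hAne
    refine ⟨fun hAX => ?_, fun _ => rfl⟩
    have hAY : ↑A ⊆ Y := by
      intro x hx
      rcases hA hx with h | h
      · exact h
      · exact absurd (Set.mem_singleton_iff.1 h ▸ hAX hx) haX
    exact (hagree A hAY hAne).symm
  have hstep : ∀ (S : Set σ) (dS : Finset σ → L.Color), Y ∪ {a} ⊆ S → S ⊆ X ∪ {a} →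
      L.MemK W S dS →
      (∀ A : Finset σ, ↑A ⊆ S → A.Nonempty →
        (↑A ⊆ X → dS A = d A) ∧ (↑A ⊆ Y ∪ {a} → dS A = e A)) →
      ∀ p ∈ X ∪ {a}, p ∉ S →
      ∃ d', L.MemK W (S ∪ {p}) d' ∧ (∀ A : Finset σ, ↑A ⊆ S → A.Nonempty → dS A = d' A) ∧
        ∀ A : Finset σ, ↑A ⊆ S ∪ {p} → A.Nonempty →
          (↑A ⊆ X → d' A = d A) ∧ (↑A ⊆ Y ∪ {a} → d' A = e A) := by
    intro S dS hbase hstop hK hRS p hp hpS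
    have haS : a ∈ S := hbase (Set.mem_union_right _ rfl)
    have hpX : p ∈ X := by
      rcases hp with h | h
      · exact h
      · exact absurd (Set.mem_singleton_iff.1 h ▸ hpS) (fun h' => h' haS)
    set Z : Set σ := S \ {a} with hZdef
    have hZX : Z ⊆ X := by
      intro x hx
      rcases hstop hx.1 with h | h
      · exact h
      · exact absurd h hx.2
    have hYZ : Y ⊆ Z := fun y hy =>
      ⟨hbase (Set.mem_union_left _ hy), fun h => haY (Set.mem_singleton_iff.1 h ▸ hy)⟩
    have hSZ : S = Z ∪ {a} := by
      ext x
      constructor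
      · intro hx
        by_cases hxa : x = a
        · exact Set.mem_union_right _ hxa
        · exact Set.mem_union_left _ ⟨hx, hxa⟩
      · rintro (hx | hx)
        · exact hx.1
        · exact Set.mem_singleton_iff.1 hx ▸ haS
    have hZcard : Cardinal.mk ↥Z = lam := by
      refine le_antisymm ?_ ?_
      · rw [← hXcard]; exact Cardinal.mk_le_mk_of_subset hZX
      · rw [← hYcard]; exact Cardinal.mk_le_mk_of_subset hYZ
    have haZ : a ∉ Z := fun h => h.2 rfl
    have hpZ : p ∉ Z := fun h => hpS h.1
    have hap : a ≠ p := fun h => haX (h ▸ hpX)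
    obtain ⟨c, hcK, hc1, hc2⟩ := hsys Z a p dS d haZ hpZ hap hZcard
      (by rw [← hSZ]; exact hK)
      (hd.subset (Set.union_subset hZX (by simpa using hpX)))
      (fun A hA hAne => (hRS A (fun x hx => (hSZ ▸ Set.mem_union_left _ (hA hx) : x ∈ S)) hAne).1
        (hA.trans hZX))
    have hset : Z ∪ {a, p} = S ∪ {p} := by
      rw [hSZ]
      ext x
      simp only [Set.mem_union, Set.mem_insert_iff, Set.mem_singleton_iff]
      tauto
    refine ⟨c, by rw [← hset]; exact hcK, ?_, ?_⟩
    · intro A hA hAne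
      exact (hc1 A (by rw [← hSZ]; exact hA) hAne).symm
    · intro A hA hAne
      constructor
      · intro hAX
        have hAa : a ∉ A := fun h => haX (hAX h)
        have hsub2 : ↑A ⊆ Z ∪ {p} := by
          intro x hx
          rcases hA hx with h | h
          · rw [hSZ] at h
            rcases h with h' | h'
            · exact Set.mem_union_left _ h'
            · exact absurd (Set.mem_singleton_iff.1 h') (fun he' => hAa (he' ▸ hx))
          · exact Set.mem_union_right _ h
        exact hc2 A hsub2 hAne
      · intro hAYa
        have hAS : ↑A ⊆ S := hAYa.trans hbase
        have hAZa : ↑A ⊆ Z ∪ {a} := by rw [← hSZ]; exact hAS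
        rw [hc1 A hAZa hAne]
        exact (hRS A hAS hAne).2 hAYa
  obtain ⟨g, hgK, hgR⟩ := L.zorn_coloring (W := W) (base := Y ∪ {a}) (top := X ∪ {a})
    (R := fun A r => (↑A ⊆ X → r = d A) ∧ (↑A ⊆ Y ∪ {a} → r = e A))
    (Set.union_subset_union_left _ hYX) e he h0R hstep
  refine ⟨g, hgK, fun A hA hAne => ?_, fun A hA hAne => ?_⟩
  · exact (hgR A (hA.trans Set.subset_union_left) hAne).1 hA
  · exact (hgR A (hA.trans (Set.union_subset_union_left _ hYX)) hAne).2 hA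

end LemmaA

/-- `K(W)` has DAP for models of size `lam` iff every special
`(lam,2)`-system of `W`-colorings has a common `W`-coloring extension. -/
theorem stmt3 (L : ColoringLanguage.{u}) (W : Set (List L.Color))
    (hW : L.IsAllowed W) (lam : Cardinal.{u}) (hlam : ℵ₀ ≤ lam) :
    L.HasDAPAt W lam ↔
      ∀ (σ : Type u) (X : Set σ) (a₁ a₂ : σ) (c₁ c₂ : Finset σ → L.Color),
        a₁ ∉ X → a₂ ∉ X → a₁ ≠ a₂ → Cardinal.mk ↥X = lam →
        L.MemK W (X ∪ {a₁}) c₁ → L.MemK W (X ∪ {a₂}) c₂ →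
        (∀ A : Finset σ, ↑A ⊆ X → A.Nonempty → c₁ A = c₂ A) →
        ∃ c : Finset σ → L.Color,
          L.MemK W (X ∪ {a₁, a₂}) c ∧
          (∀ A : Finset σ, ↑A ⊆ X ∪ {a₁} → A.Nonempty → c A = c₁ A) ∧
          (∀ A : Finset σ, ↑A ⊆ X ∪ {a₂} → A.Nonempty → c A = c₂ A) := by
  classical
  constructor
  · -- DAP implies amalgamation of special (λ,2)-systems
    intro hdap σ X a₁ a₂ c₁ c₂ ha₁ ha₂ hne12 hX h₁ h₂ hagree
    have hXsub1 : X ⊆ X ∪ {a₁} := Set.subset_union_left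
    have hXsub2 : X ⊆ X ∪ {a₂} := Set.subset_union_left
    have hcard : ∀ (a : σ), Cardinal.mk ↥(X ∪ ({a} : Set σ)) = lam := by
      intro a
      refine le_antisymm ?_ (by rw [← hX]; exact Cardinal.mk_le_mk_of_subset Set.subset_union_left)
      calc Cardinal.mk ↥(X ∪ ({a} : Set σ)) ≤ Cardinal.mk ↥X + Cardinal.mk ↥({a} : Set σ) :=
            Cardinal.mk_union_le _ _
        _ = lam + 1 := by rw [hX, Cardinal.mk_singleton]
        _ = lam := Cardinal.add_one_eq hlam
    obtain ⟨τ, N, cN, f₁, f₂, hNK, hE₁, hE₂, hf₀, hdj⟩ :=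
      hdap σ X (X ∪ {a₁}) (X ∪ {a₂}) c₁ c₁ c₂
        (h₁.subset hXsub1) h₁ h₂ hX (hcard a₁) (hcard a₂)
        ⟨hXsub1, fun _ _ _ => rfl⟩ ⟨hXsub2, fun A hA hAne => hagree A hA hAne⟩
    letI : DecidableEq σ := Classical.decEq σ
    letI : DecidableEq τ := Classical.decEq τ
    set g : σ → τ := fun x => if x = a₂ then f₂ a₂ else f₁ x with hgdef
    have hg1 : ∀ x ∈ X ∪ ({a₁} : Set σ), g x = f₁ x := by
      intro x hx
      have hxa : x ≠ a₂ := by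
        rintro rfl
        rcases hx with h | h
        · exact ha₂ h
        · exact hne12 (Set.mem_singleton_iff.1 h).symm
      simp [hgdef, hxa]
    have hg2 : ∀ x ∈ X ∪ ({a₂} : Set σ), g x = f₂ x := by
      intro x hx
      by_cases hxa : x = a₂
      · simp [hgdef, hxa]
      · have hxX : x ∈ X := by
          rcases hx with h | h
          · exact h
          · exact absurd (Set.mem_singleton_iff.1 h) hxa
        simp [hgdef, hxa, hf₀ x hxX]
    have hf2a : f₂ a₂ ∉ f₁ '' (X ∪ {a₁}) := by
      rintro ⟨x, hx, hxe⟩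
      have hmem : f₂ a₂ ∈ f₁ '' (X ∪ {a₁}) ∩ f₂ '' (X ∪ {a₂}) :=
        ⟨⟨x, hx, hxe⟩, ⟨a₂, Set.mem_union_right _ rfl, rfl⟩⟩
      rw [hdj] at hmem
      obtain ⟨z, hz, hze⟩ := hmem
      have hz2 : f₂ z = f₂ a₂ := by rw [← hf₀ z hz]; exact hze
      have hza : z = a₂ := hE₂.1 (hXsub2 hz) (Set.mem_union_right _ rfl) hz2
      exact ha₂ (hza ▸ hz)
    have hU : X ∪ ({a₁, a₂} : Set σ) = (X ∪ {a₁}) ∪ {a₂} := by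
      ext x
      simp only [Set.mem_union, Set.mem_insert_iff, Set.mem_singleton_iff]
      tauto
    have hmem' : ∀ x ∈ X ∪ ({a₁, a₂} : Set σ), x ≠ a₂ → x ∈ X ∪ ({a₁} : Set σ) := by
      intro x hx hxa
      rw [hU] at hx
      rcases hx with h | h
      · exact h
      · exact absurd (Set.mem_singleton_iff.1 h) hxa
    have hginj : Set.InjOn g (X ∪ {a₁, a₂}) := by
      intro x hx y hy hxy
      by_cases hxa : x = a₂ <;> by_cases hya : y = a₂
      · rw [hxa, hya]
      · exfalso
        have hy' := hmem' y hy hya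
        refine hf2a ⟨y, hy', ?_⟩
        rw [← hg1 y hy', ← hxy, hgdef]
        simp [hxa]
      · exfalso
        have hx' := hmem' x hx hxa
        refine hf2a ⟨x, hx', ?_⟩
        rw [← hg1 x hx', hxy, hgdef]
        simp [hya]
      · have hx' := hmem' x hx hxa
        have hy' := hmem' y hy hya
        refine hE₁.1 hx' hy' ?_
        rw [← hg1 x hx', ← hg1 y hy']
        exact hxy
    have hgim : g '' (X ∪ {a₁, a₂}) ⊆ N := by
      rintro t ⟨x, hx, rfl⟩
      by_cases hxa : x = a₂
      · have : g x = f₂ a₂ := by simp [hgdef, hxa]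
        rw [this]
        exact hE₂.2.1 ⟨a₂, Set.mem_union_right _ rfl, rfl⟩
      · have hx' := hmem' x hx hxa
        rw [hg1 x hx']
        exact hE₁.2.1 ⟨x, hx', rfl⟩
    refine ⟨fun A => cN (A.image g), hNK.pullback g hginj hgim, ?_, ?_⟩
    · intro A hA hAne
      show cN (A.image g) = c₁ A
      have himg : A.image g = A.image f₁ := Finset.image_congr (fun x hx => hg1 x (hA hx))
      rw [himg]
      exact hE₁.2.2 A hA hAne
    · intro A hA hAne
      show cN (A.image g) = c₂ A
      have himg : A.image g = A.image f₂ := Finset.image_congr (fun x hx => hg2 x (hA hx))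
      rw [himg]
      exact hE₂.2.2 A hA hAne
  · -- amalgamation of special (λ,2)-systems implies DAP
    intro hsys σ M₀ M₁ M₂ c₀ c₁ c₂ h₀ h₁ h₂ hm₀ hm₁ hm₂ hs₁ hs₂
    letI : DecidableEq σ := Classical.decEq σ
    letI : DecidableEq (σ ⊕ σ) := Classical.decEq _
    set f₁ : σ → σ ⊕ σ := Sum.inl with hf₁def
    set f₂ : σ → σ ⊕ σ := fun x => if x ∈ M₀ then Sum.inl x else Sum.inr x with hf₂def
    set g : σ ⊕ σ → σ := Sum.elim id id with hgdef
    have hgf₁ : ∀ x, g (f₁ x) = x := fun x => rfl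
    have hgf₂ : ∀ x, g (f₂ x) = x := by
      intro x
      by_cases h : x ∈ M₀ <;> simp [hf₂def, hgdef, h]
    have hf₁inj : Function.Injective f₁ := Sum.inl_injective
    have hf₂inj : Function.Injective f₂ := by
      intro x y h
      by_cases hx : x ∈ M₀ <;> by_cases hy : y ∈ M₀ <;>
        simp only [hf₂def, if_pos, if_neg, hx, hy, if_true, if_false] at h <;>
        first
          | exact Sum.inl.inj h
          | exact Sum.inr.inj h
          | exact absurd h (by simp)
    set M₀' : Set (σ ⊕ σ) := f₁ '' M₀ with hM₀'def
    set M₁' : Set (σ ⊕ σ) := f₁ '' M₁ with hM₁'def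
    set M₂' : Set (σ ⊕ σ) := f₂ '' M₂ with hM₂'def
    have hM₀eq : f₂ '' M₀ = M₀' := Set.image_congr (fun x hx => by simp [hf₂def, hf₁def, hx])
    have hsub01 : M₀' ⊆ M₁' := Set.image_mono hs₁.1
    have hsub02 : M₀' ⊆ M₂' := by rw [← hM₀eq]; exact Set.image_mono hs₂.1
    have hdisj : M₁' ∩ M₂' ⊆ M₀' := by
      rintro t ⟨⟨x, hx, rfl⟩, ⟨y, hy, hyt⟩⟩
      by_cases hy0 : y ∈ M₀
      · have hyx : y = x := by
          have : f₂ y = Sum.inl y := by simp [hf₂def, hy0]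
          rw [this] at hyt
          exact Sum.inl.inj hyt
        exact ⟨x, hyx ▸ hy0, rfl⟩
      · exfalso
        have : f₂ y = Sum.inr y := by simp [hf₂def, hy0]
        rw [this] at hyt
        exact absurd hyt (by simp [hf₁def])
    set κ₀ : Finset (σ ⊕ σ) → L.Color := fun A => c₀ (A.image g) with hκ₀def
    set κ₁ : Finset (σ ⊕ σ) → L.Color := fun A => c₁ (A.image g) with hκ₁def
    set κ₂ : Finset (σ ⊕ σ) → L.Color := fun A => c₂ (A.image g) with hκ₂def
    have hK₀' : L.MemK W M₀' κ₀ := h₀.transport f₁ g (fun x _ => hgf₁ x)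
    have hK₁' : L.MemK W M₁' κ₁ := h₁.transport f₁ g (fun x _ => hgf₁ x)
    have hK₂' : L.MemK W M₂' κ₂ := h₂.transport f₂ g (fun x _ => hgf₂ x)
    have hc₀' : Cardinal.mk ↥M₀' = lam := by
      rw [hM₀'def, Cardinal.mk_image_eq hf₁inj]; exact hm₀
    have hc₁' : Cardinal.mk ↥M₁' = lam := by
      rw [hM₁'def, Cardinal.mk_image_eq hf₁inj]; exact hm₁
    have hc₂' : Cardinal.mk ↥M₂' = lam := by
      rw [hM₂'def, Cardinal.mk_image_eq hf₂inj]; exact hm₂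
    set N : Set (σ ⊕ σ) := M₁' ∪ M₂' with hNdef
    have hNle : Cardinal.mk ↥N ≤ lam := by
      refine le_trans (Cardinal.mk_union_le _ _) ?_
      rw [hc₁', hc₂']
      exact le_of_eq (Cardinal.add_eq_self hlam)
    have hbase_top : M₀' ⊆ N := hsub01.trans Set.subset_union_left
    -- initial coloring satisfies R
    have h₀R : ∀ A : Finset (σ ⊕ σ), ↑A ⊆ M₀' → A.Nonempty →
        ((↑A ⊆ M₁' → κ₀ A = κ₁ A) ∧ (↑A ⊆ M₂' → κ₀ A = κ₂ A)) := by
      intro A hA hAne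
      constructor
      · intro _
        exact hs₁.2 (A.image g) (ColoringLanguage.image_g_subset (fun x _ => hgf₁ x) hA)
          (hAne.image g)
      · intro _
        have hA2 : ↑A ⊆ f₂ '' M₀ := by rw [hM₀eq]; exact hA
        exact hs₂.2 (A.image g) (ColoringLanguage.image_g_subset (fun x _ => hgf₂ x) hA2)
          (hAne.image g)
    -- the step
    have hstep : ∀ (S : Set (σ ⊕ σ)) (dS : Finset (σ ⊕ σ) → L.Color), M₀' ⊆ S → S ⊆ N →
        L.MemK W S dS →
        (∀ A : Finset (σ ⊕ σ), ↑A ⊆ S → A.Nonempty →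
          (↑A ⊆ M₁' → dS A = κ₁ A) ∧ (↑A ⊆ M₂' → dS A = κ₂ A)) →
        ∀ p ∈ N, p ∉ S →
        ∃ d', L.MemK W (S ∪ {p}) d' ∧
          (∀ A : Finset (σ ⊕ σ), ↑A ⊆ S → A.Nonempty → dS A = d' A) ∧
          ∀ A : Finset (σ ⊕ σ), ↑A ⊆ S ∪ {p} → A.Nonempty →
            (↑A ⊆ M₁' → d' A = κ₁ A) ∧ (↑A ⊆ M₂' → d' A = κ₂ A) := by
      intro S dS hbS hSN hKS hRS p hp hpS
      have hSlam : Cardinal.mk ↥S = lam :=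
        le_antisymm (le_trans (Cardinal.mk_le_mk_of_subset hSN) hNle)
          (by rw [← hc₀']; exact Cardinal.mk_le_mk_of_subset hbS)
      rcases hp with hp1 | hp2
      · -- p ∈ M₁'
        have hYlam : Cardinal.mk ↥(S ∩ M₁') = lam :=
          le_antisymm
            (le_trans (Cardinal.mk_le_mk_of_subset Set.inter_subset_left) hSlam.le)
            (by rw [← hc₀']
                exact Cardinal.mk_le_mk_of_subset (Set.subset_inter hbS hsub01))
        have hYp : (S ∩ M₁') ∪ {p} ⊆ M₁' :=
          Set.union_subset Set.inter_subset_right (by simpa using hp1)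
        obtain ⟨g', hg'K, hg'd, hg'e⟩ := L.extend_one (hsys (σ ⊕ σ)) hpS
          Set.inter_subset_left hSlam hYlam hKS (hK₁'.subset hYp)
          (fun A hA hAne =>
            (hRS A (hA.trans Set.inter_subset_left) hAne).1 (hA.trans Set.inter_subset_right))
        refine ⟨g', hg'K, fun A hA hAne => (hg'd A hA hAne).symm, fun A hA hAne => ⟨?_, ?_⟩⟩
        · intro hAM₁
          refine hg'e A ?_ hAne
          intro x hx
          rcases hA hx with h | h
          · exact Set.mem_union_left _ ⟨h, hAM₁ hx⟩
          · exact Set.mem_union_right _ h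
        · intro hAM₂
          have hpM₂ : p ∉ M₂' := fun hpm => hpS (hbS (hdisj ⟨hp1, hpm⟩))
          have hAS : ↑A ⊆ S := by
            intro x hx
            rcases hA hx with h | h
            · exact h
            · exact absurd (Set.mem_singleton_iff.1 h ▸ hAM₂ hx) hpM₂
          rw [hg'd A hAS hAne]
          exact (hRS A hAS hAne).2 hAM₂
      · -- p ∈ M₂'
        have hYlam : Cardinal.mk ↥(S ∩ M₂') = lam :=
          le_antisymm
            (le_trans (Cardinal.mk_le_mk_of_subset Set.inter_subset_left) hSlam.le)
            (by rw [← hc₀']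
                exact Cardinal.mk_le_mk_of_subset (Set.subset_inter hbS hsub02))
        have hYp : (S ∩ M₂') ∪ {p} ⊆ M₂' :=
          Set.union_subset Set.inter_subset_right (by simpa using hp2)
        obtain ⟨g', hg'K, hg'd, hg'e⟩ := L.extend_one (hsys (σ ⊕ σ)) hpS
          Set.inter_subset_left hSlam hYlam hKS (hK₂'.subset hYp)
          (fun A hA hAne =>
            (hRS A (hA.trans Set.inter_subset_left) hAne).2 (hA.trans Set.inter_subset_right))
        refine ⟨g', hg'K, fun A hA hAne => (hg'd A hA hAne).symm, fun A hA hAne => ⟨?_, ?_⟩⟩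
        · intro hAM₁
          have hpM₁ : p ∉ M₁' := fun hpm => hpS (hbS (hdisj ⟨hpm, hp2⟩))
          have hAS : ↑A ⊆ S := by
            intro x hx
            rcases hA hx with h | h
            · exact h
            · exact absurd (Set.mem_singleton_iff.1 h ▸ hAM₁ hx) hpM₁
          rw [hg'd A hAS hAne]
          exact (hRS A hAS hAne).1 hAM₁
        · intro hAM₂
          refine hg'e A ?_ hAne
          intro x hx
          rcases hA hx with h | h
          · exact Set.mem_union_left _ ⟨h, hAM₂ hx⟩
          · exact Set.mem_union_right _ h
    obtain ⟨d, hdK, hdR⟩ := L.zorn_coloring (W := W) (base := M₀') (top := N)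
      (R := fun A r => (↑A ⊆ M₁' → r = κ₁ A) ∧ (↑A ⊆ M₂' → r = κ₂ A))
      hbase_top κ₀ hK₀' h₀R hstep
    refine ⟨σ ⊕ σ, N, d, f₁, f₂, hdK, ⟨hf₁inj.injOn, ?_, ?_⟩, ⟨hf₂inj.injOn, ?_, ?_⟩,
      fun x hx => by simp [hf₂def, hf₁def, hx], ?_⟩
    · exact Set.subset_union_left
    · intro A hA hAne
      have h1 : ↑(A.image f₁) ⊆ M₁' := by
        rw [Finset.coe_image]
        exact Set.image_mono hA
      have := (hdR (A.image f₁) (h1.trans Set.subset_union_left) (hAne.image f₁)).1 h1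
      rw [this, hκ₁def]
      show c₁ ((A.image f₁).image g) = c₁ A
      rw [ColoringLanguage.image_image_id (M := M₁) (fun x _ => hgf₁ x) A hA]
    · exact Set.subset_union_right
    · intro A hA hAne
      have h2 : ↑(A.image f₂) ⊆ M₂' := by
        rw [Finset.coe_image]
        exact Set.image_mono hA
      have := (hdR (A.image f₂) (h2.trans Set.subset_union_right) (hAne.image f₂)).2 h2
      rw [this, hκ₂def]
      show c₂ ((A.image f₂).image g) = c₂ A
      rw [ColoringLanguage.image_image_id (M := M₂) (fun x _ => hgf₂ x) A hA]
    · exact Set.Subset.antisymm hdisj (Set.subset_inter hsub01 hsub02)
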